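/- Let $R$ be a Noetherian ring, $M$ a finitely generated torsion-free $R$-module, and $a$ a non-zerodivisor of $R$ with $\mathrm{Min}^1_R M/aM\ne\emptyset$. Then there exists a non-zerodivisor $b\in R$ such that $\mathrm{ht}_R(a,b)\ge 2$ and $\mathrm{U}(aM)=aM:_M b$. -/

import Mathlib

open Pointwise

/-- The height of an ideal. -/
noncomputable def idealHt {R : Type*} [CommRing R] (I : Ideal R) : ℕ∞ :=
  ⨅ p ∈ {p : PrimeSpectrum R | I ≤ p.asIdeal}, Order.height p

/-- `Min¹_R(M/aM)`: the height-one minimal primes of the support of `M/aM`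
(equivalently, of the annihilator of `M/aM`, as `M` is finitely generated). -/
noncomputable def minOne (R : Type*) [CommRing R] (M : Type*) [AddCommGroup M]
    [Module R M] (a : R) : Set (Ideal R) :=
  {p | p ∈ (Module.annihilator R (M ⧸ (a • (⊤ : Submodule R M)))).minimalPrimes ∧
    idealHt p = 1}

/-- `U(aM)`: the intersection of the primary components of `aM` in `M` at the
height-one minimal primes of `M/aM` (the primary component at a minimal prime
`p` being the saturation `{x ∈ M | sx ∈ aM for some s ∉ p}`); by convention
`U(aM) = M` when there are no such primes. -/
noncomputable def Uset (R : Type*) [CommRing R] (M : Type*) [AddCommGroup M]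
    [Module R M] (a : R) : Set M :=
  ⋂ p ∈ minOne R M a, {x : M | ∃ s, s ∉ p ∧ s • x ∈ (a • (⊤ : Submodule R M))}


lemma assoc_subset_union {R M : Type*} [CommRing R] [IsNoetherianRing R] [AddCommGroup M] [Module R M]
    (S : Submodule R M) :
    associatedPrimes R M ⊆ associatedPrimes R S ∪ associatedPrimes R (M ⧸ S) := by
  rintro p hp'
  rw [AssociatedPrimes.mem_iff, isAssociatedPrime_iff] at hp'
  obtain ⟨hp, x, rfl⟩ := hp'
  by_cases hc : ∃ r : R, r • x ∈ S ∧ r • x ≠ 0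
  · obtain ⟨r, hrS, hr0⟩ := hc
    have hrp : ¬ r • x = 0 := hr0
    left
    rw [AssociatedPrimes.mem_iff, isAssociatedPrime_iff]
    refine ⟨hp, ⟨⟨r • x, hrS⟩, ?_⟩⟩
    ext s
    rw [Submodule.mem_colon_singleton, Submodule.mem_colon_singleton, Submodule.mem_bot,
      Submodule.mem_bot]
    have : (s • (⟨r • x, hrS⟩ : S) = 0) ↔ s • (r • x) = 0 := by
      rw [Subtype.ext_iff]; rfl
    rw [this]
    constructor
    · intro hs
      rw [smul_comm, hs, smul_zero]
    · intro hs
      rw [smul_smul] at hs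
      have hsr : s * r ∈ (⊥ : Submodule R M).colon {x} := by
        rw [Submodule.mem_colon_singleton, Submodule.mem_bot]; exact hs
      rcases hp.mem_or_mem hsr with h | h
      · rwa [Submodule.mem_colon_singleton, Submodule.mem_bot] at h
      · rw [Submodule.mem_colon_singleton, Submodule.mem_bot] at h
        exact absurd h hrp
  · push_neg at hc
    right
    rw [AssociatedPrimes.mem_iff, isAssociatedPrime_iff]
    refine ⟨hp, ⟨Submodule.Quotient.mk x, ?_⟩⟩
    ext s
    rw [Submodule.mem_colon_singleton, Submodule.mem_colon_singleton, Submodule.mem_bot,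
      Submodule.mem_bot, ← Submodule.Quotient.mk_smul, Submodule.Quotient.mk_eq_zero]
    constructor
    · intro hs
      rw [hs]; exact S.zero_mem
    · intro hs
      exact hc s hs

lemma assoc_span_singleton_subset {R M : Type*} [CommRing R] [IsNoetherianRing R] [AddCommGroup M] [Module R M]
    (p : Ideal R) (hp : p.IsPrime) (x : M) (hx : (Submodule.span R {x}).annihilator = p) :
    associatedPrimes R (Submodule.span R {x} : Submodule R M) ⊆ {p} := by
  rintro q hq'
  rw [AssociatedPrimes.mem_iff, isAssociatedPrime_iff] at hq'
  obtain ⟨hq, y, rfl⟩ := hq'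
  obtain ⟨r, hr⟩ := Submodule.mem_span_singleton.mp y.2
  have hy : (y : M) = r • x := hr.symm
  have hyne : (y : M) ≠ 0 := by
    intro h0
    apply hq.ne_top
    rw [eq_top_iff]
    intro s _
    rw [Submodule.mem_colon_singleton, Submodule.mem_bot, Subtype.ext_iff]
    show s • (y : M) = 0
    rw [h0, smul_zero]
  have hrp : r • x ≠ 0 := hy ▸ hyne
  simp only [Set.mem_singleton_iff]
  ext s
  rw [Submodule.mem_colon_singleton, Submodule.mem_bot]
  have : (s • y = 0) ↔ s • (y : M) = 0 := by rw [Subtype.ext_iff]; rfl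
  rw [this, hy, smul_smul]
  have hmem : ∀ t : R, t • x = 0 ↔ t ∈ p := by
    intro t; rw [← hx, Submodule.mem_annihilator_span_singleton]
  rw [hmem]
  have hrnp : r ∉ p := by
    intro h; exact hrp ((hmem r).mpr h)
  constructor
  · intro h; exact ((hp.mem_or_mem h)).resolve_right hrnp
  · intro h; exact Ideal.mul_mem_right r p h

lemma assoc_finite {R M : Type*} [CommRing R] [IsNoetherianRing R] [AddCommGroup M] [Module R M]
    [IsNoetherian R M] : (associatedPrimes R M).Finite := by
  suffices h : ∀ N : Submodule R M, (associatedPrimes R (M ⧸ N)).Finite by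
    have := h ⊥
    rwa [LinearEquiv.AssociatedPrimes.eq (Submodule.quotEquivOfEqBot ⊥ rfl)] at this
  intro N
  induction N using IsNoetherian.induction with
  | _ N IH =>
  by_cases hs : Subsingleton (M ⧸ N)
  · rw [associatedPrimes.eq_empty_of_subsingleton]; exact Set.finite_empty
  have : Nontrivial (M ⧸ N) := not_subsingleton_iff_nontrivial.mp hs
  obtain ⟨p, hp⟩ := associatedPrimes.nonempty R (M ⧸ N)
  rw [AssociatedPrimes.mem_iff, isAssociatedPrime_iff] at hp
  obtain ⟨hpp, xb, hxb⟩ := hp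
  obtain ⟨x, rfl⟩ := Submodule.Quotient.mk_surjective N xb
  have hxN : x ∉ N := by
    intro h
    apply hpp.ne_top
    rw [hxb, eq_top_iff]
    intro s _
    rw [Submodule.mem_colon_singleton, Submodule.mem_bot, ← Submodule.Quotient.mk_smul,
      Submodule.Quotient.mk_eq_zero]
    exact N.smul_mem s h
  set N' := N ⊔ Submodule.span R {x} with hN'
  have hNN' : N < N' := by
    refine lt_of_le_of_ne le_sup_left ?_
    intro h
    apply hxN; rw [h]; exact le_sup_right (α := Submodule R M) (Submodule.mem_span_singleton_self x)
  have hmap : Submodule.map N.mkQ N' = Submodule.span R {Submodule.Quotient.mk x} := by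
    rw [hN', Submodule.map_sup, Submodule.map_span, Set.image_singleton]
    rw [Submodule.mkQ_map_self, bot_sup_eq]
    rfl
  have hann : (Submodule.span R {Submodule.Quotient.mk x (p := N)}).annihilator = p := by
    rw [hxb]; ext s
    rw [Submodule.mem_annihilator_span_singleton, Submodule.mem_colon_singleton, Submodule.mem_bot]
  have h1 := assoc_subset_union (Submodule.span R {Submodule.Quotient.mk x (p := N)})
  have h2 := assoc_span_singleton_subset p hpp (Submodule.Quotient.mk x (p := N)) hann
  have h3 : associatedPrimes R ((M ⧸ N) ⧸ (Submodule.span R {Submodule.Quotient.mk x (p := N)}))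
      = associatedPrimes R (M ⧸ N') := by
    rw [← hmap]
    exact LinearEquiv.AssociatedPrimes.eq (Submodule.quotientQuotientEquivQuotient N N' le_sup_left)
  refine Set.Finite.subset (Set.Finite.union (Set.finite_singleton p) (IH N' hNN')) ?_
  intro q hq
  rcases h1 hq with h | h
  · exact Or.inl (h2 h)
  · exact Or.inr (h3 ▸ h)

/-- saturation submodule at a prime -/
def primeSat {R M : Type*} [CommRing R] [AddCommGroup M] [Module R M]
    (p : Ideal R) (hp : p.IsPrime) : Submodule R M where
  carrier := {x | ∃ s, s ∉ p ∧ s • x = 0}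
  add_mem' := by
    rintro x y ⟨s, hs, hsx⟩ ⟨t, ht, hty⟩
    refine ⟨s * t, fun h => (hp.mem_or_mem h).elim hs ht, ?_⟩
    have h1 : (s * t) • x = 0 := by rw [mul_comm, mul_smul, hsx, smul_zero]
    have h2 : (s * t) • y = 0 := by rw [mul_smul, hty, smul_zero]
    rw [smul_add, h1, h2, add_zero]
  zero_mem' := ⟨1, fun h => hp.ne_top ((Ideal.eq_top_iff_one p).mpr h), smul_zero 1⟩
  smul_mem' := by
    rintro c x ⟨s, hs, h⟩
    exact ⟨s, hs, by rw [smul_comm, h, smul_zero]⟩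

lemma idealHt_prime {R : Type*} [CommRing R] (p : PrimeSpectrum R) :
    idealHt p.asIdeal = Order.height p := by
  apply le_antisymm
  · exact iInf₂_le p (le_refl _)
  · exact le_iInf₂ fun q hq => Order.height_mono (hq : p ≤ q)

lemma minimal_prime_zerodivisor {R : Type*} [CommRing R] (p : Ideal R) [hp : p.IsPrime]
    (hmin : p ∈ minimalPrimes R) (a : R) (ha : a ∈ nonZeroDivisors R) (hap : a ∈ p) : False := by
  have h1 : algebraMap R (Localization p.primeCompl) a ∈ IsLocalRing.maximalIdeal _ := by
    rw [IsLocalization.AtPrime.to_map_mem_maximal_iff _ p]; exact hap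
  exact Set.disjoint_left.mp (Ideal.disjoint_nonZeroDivisors_of_mem_minimalPrimes hmin) hap ha

lemma nzd_of_not_mem_assoc {R : Type*} [CommRing R] [IsNoetherianRing R] {b : R}
    (h : ∀ q ∈ associatedPrimes R R, b ∉ q) : b ∈ nonZeroDivisors R := by
  rw [mem_nonZeroDivisors_iff_right]
  intro x hx
  by_contra hx0
  have hb : b ∈ ⋃ p ∈ associatedPrimes R R, (p : Set R) := by
    rw [biUnion_associatedPrimes_eq_zero_divisors]
    exact ⟨x, hx0, by rw [smul_eq_mul, mul_comm]; exact hx⟩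
  obtain ⟨q, hq1, hq2⟩ := Set.mem_iUnion₂.mp hb
  exact h q hq1 hq2

lemma assoc_prime_not_mem {R : Type*} [CommRing R] [IsNoetherianRing R] {q : Ideal R} (hq : q ∈ associatedPrimes R R)
    {a : R} (ha : a ∈ nonZeroDivisors R) : a ∉ q := by
  rw [AssociatedPrimes.mem_iff, isAssociatedPrime_iff] at hq
  obtain ⟨hqp, x, rfl⟩ := hq
  intro h
  rw [Submodule.mem_colon_singleton, Submodule.mem_bot, smul_eq_mul, mul_comm] at h
  have hx0 : x = 0 := mem_nonZeroDivisors_iff_right.mp ha x h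
  apply hqp.ne_top
  rw [hx0, eq_top_iff]
  intro s _
  rw [Submodule.mem_colon_singleton, smul_zero]
  exact Submodule.zero_mem _

/-- for a finitely generated torsion-free module `M` over a
Noetherian ring `R` and a non-zerodivisor `a` with `Min¹_R(M/aM) ≠ ∅`, there
is a non-zerodivisor `b` with `ht (a,b) ≥ 2` and `U(aM) = aM :_M b`. -/
theorem stmt11 {R : Type*} [CommRing R] [IsNoetherianRing R]
    {M : Type*} [AddCommGroup M] [Module R M] [Module.Finite R M]
    (htf : ∀ r ∈ nonZeroDivisors R, Function.Injective fun x : M => r • x)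
    (a : R) (ha : a ∈ nonZeroDivisors R) (hne : (minOne R M a).Nonempty) :
    ∃ b ∈ nonZeroDivisors R, 2 ≤ idealHt (Ideal.span {a, b}) ∧
      Uset R M a = {x : M | b • x ∈ (a • (⊤ : Submodule R M))} := by
  classical
  set N := M ⧸ (a • (⊤ : Submodule R M)) with hN
  set Ann := Module.annihilator R N with hAnn
  have hprime : ∀ p ∈ minOne R M a, (p : Ideal R).IsPrime := fun p hp => hp.1.1.1
  have hAnnle : ∀ p ∈ minOne R M a, Ann ≤ p := fun p hp => hp.1.1.2
  -- a ∈ Ann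
  have haAnn : a ∈ Ann := by
    rw [hAnn, Module.mem_annihilator]
    intro n
    obtain ⟨x, rfl⟩ := Submodule.Quotient.mk_surjective _ n
    rw [← Submodule.Quotient.mk_smul, Submodule.Quotient.mk_eq_zero]
    exact Submodule.smul_mem_pointwise_smul x a ⊤ trivial
  -- the submodule T
  set T : Submodule R N := ⨅ (p : minOne R M a), primeSat p.1 (hprime p.1 p.2) with hT
  have hmemT : ∀ n : N, n ∈ T ↔ ∀ p ∈ minOne R M a, ∃ s, s ∉ p ∧ s • n = 0 := by
    intro n
    rw [hT, Submodule.mem_iInf]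
    constructor
    · intro h p hp; exact h ⟨p, hp⟩
    · intro h p; exact h p.1 p.2
  -- Ann ≤ T.annihilator
  have hAnnT : Ann ≤ T.annihilator := by
    intro r hr
    rw [Submodule.mem_annihilator]
    intro n _
    exact Module.mem_annihilator.mp hr n
  -- Fact A : for p ∈ minOne, exists s ∈ T.annihilator, s ∉ p
  have factA : ∀ p ∈ minOne R M a, ∃ s, s ∉ p ∧ s ∈ T.annihilator := by
    intro p hp
    obtain ⟨G, hG⟩ := (IsNoetherian.noetherian T : T.FG)
    set f : N → R := fun n => if h : ∃ s, s ∉ p ∧ s • n = 0 then h.choose else 1 with hf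
    have hfspec : ∀ n ∈ T, f n ∉ p ∧ f n • n = 0 := by
      intro n hn
      have hex : ∃ s, s ∉ p ∧ s • n = 0 := (hmemT n).mp hn p hp
      rw [hf]
      simp only [dif_pos hex]
      exact hex.choose_spec
    set s : R := ∏ x ∈ G, f x with hs
    have hGT : ∀ x ∈ G, (x : N) ∈ T := by
      intro x hx
      rw [← hG]
      exact Submodule.subset_span hx
    refine ⟨s, ?_, ?_⟩
    · intro hsp
      haveI := hprime p hp
      obtain ⟨x, hxG, hxp⟩ := Ideal.IsPrime.prod_mem_iff.mp hsp
      exact (hfspec x (hGT x hxG)).1 hxp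
    · rw [Submodule.mem_annihilator]
      intro n hn
      rw [← hG] at hn
      induction hn using Submodule.span_induction with
      | mem x hx =>
        rw [hs, ← Finset.mul_prod_erase G f hx, mul_comm, mul_smul, (hfspec x (hGT x hx)).2,
          smul_zero]
      | zero => rw [smul_zero]
      | add x y _ _ hx hy => rw [smul_add, hx, hy, add_zero]
      | smul c x _ hx => rw [smul_comm, hx, smul_zero]
  -- The finite avoidance set
  set F3 : Set (Ideal R) := {p ∈ (Ideal.span {a}).minimalPrimes | ¬ Ann ≤ p} with hF3
  set Fset : Set (Ideal R) := minOne R M a ∪ associatedPrimes R R ∪ F3 with hFset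
  have hFfin : Fset.Finite := by
    apply Set.Finite.union
    apply Set.Finite.union
    · refine Set.Finite.subset ?_ (fun p hp => hp.1)
      rw [Ideal.minimalPrimes_eq_comap]
      exact Set.Finite.image _ (minimalPrimes.finite_of_isNoetherianRing _)
    · exact assoc_finite
    · refine Set.Finite.subset ?_ (fun p hp => hp.1)
      rw [Ideal.minimalPrimes_eq_comap]
      exact Set.Finite.image _ (minimalPrimes.finite_of_isNoetherianRing _)
  have hFprime : ∀ p ∈ Fset, p.IsPrime := by
    rintro p ((hp | hp) | hp)
    · exact hprime p hp
    · exact hp.1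
    · exact hp.1.1.1
  -- each member of Fset fails to contain T.annihilator
  have hFnot : ∀ p ∈ Fset, ¬ T.annihilator ≤ p := by
    rintro p ((hp | hp) | hp) hle
    · obtain ⟨s, hs1, hs2⟩ := factA p hp
      exact hs1 (hle hs2)
    · exact assoc_prime_not_mem hp ha (hle (hAnnT haAnn))
    · exact hp.2 (le_trans hAnnT hle)
  -- prime avoidance
  have havoid : ∃ b ∈ T.annihilator, ∀ p ∈ Fset, b ∉ p := by
    by_contra hcon
    push_neg at hcon
    have hsub : (T.annihilator : Set R) ⊆ ⋃ p ∈ (hFfin.toFinset : Set (Ideal R)), ((p : Ideal R) : Set R) := by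
      intro b hb
      obtain ⟨p, hp1, hp2⟩ := hcon b hb
      exact Set.mem_biUnion (show p ∈ (hFfin.toFinset : Set (Ideal R)) from hFfin.mem_toFinset.mpr hp1) hp2
    rw [Ideal.subset_union_prime (f := fun p => p) ⊥ ⊥ (fun p hp _ _ => hFprime p (hFfin.mem_toFinset.mp hp))]
      at hsub
    obtain ⟨p, hp1, hp2⟩ := hsub
    exact hFnot p (hFfin.mem_toFinset.mp hp1) hp2
  obtain ⟨b, hbT, hbF⟩ := havoid
  refine ⟨b, ?_, ?_, ?_⟩
  -- b is a nonzerodivisor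
  · exact nzd_of_not_mem_assoc (fun q hq => hbF q (Or.inl (Or.inr hq)))
  -- height ≥ 2
  · rw [idealHt]
    refine le_iInf₂ fun P hP => ?_
    have haP : a ∈ P.asIdeal := hP (Ideal.subset_span (by simp))
    have hbP : b ∈ P.asIdeal := hP (Ideal.subset_span (by simp))
    by_contra hlt
    push_neg at hlt
    have hle1 : Order.height P ≤ 1 := Order.le_of_lt_succ hlt
    -- every prime strictly below P is minimal
    have hbelow : ∀ Q : PrimeSpectrum R, Q < P → Q.asIdeal ∈ minimalPrimes R := by
      intro Q hQ
      have h' := Order.height_le_coe_iff.mp (by exact_mod_cast hle1) Q hQ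
      simp only [Nat.cast_one, ENat.lt_one_iff_eq_zero, Order.height_eq_zero] at h'
      exact PrimeSpectrum.isMin_iff.mp h'
    -- P itself is not minimal
    have hPnotmin : P.asIdeal ∉ minimalPrimes R := by
      intro h
      exact minimal_prime_zerodivisor P.asIdeal h a ha haP
    -- P is minimal over (a)
    have hPmin : P.asIdeal ∈ (Ideal.span {a}).minimalPrimes := by
      refine ⟨⟨P.isPrime, by rwa [Ideal.span_singleton_le_iff_mem]⟩, ?_⟩
      rintro Q ⟨hQp, hQa⟩ hQP
      by_contra hPQ
      have hQltP : (⟨Q, hQp⟩ : PrimeSpectrum R) < P :=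
        lt_iff_le_not_ge.mpr ⟨hQP, fun h => hPQ h⟩
      have hQmin := hbelow ⟨Q, hQp⟩ hQltP
      rw [Ideal.span_singleton_le_iff_mem] at hQa
      exact minimal_prime_zerodivisor Q hQmin a ha hQa
    by_cases hAnnP : Ann ≤ P.asIdeal
    · -- then P ∈ minOne, contradiction with b ∉ P
      have hPht : Order.height P = 1 := by
        refine le_antisymm hle1 ?_
        rw [ENat.one_le_iff_ne_zero]
        intro h0
        rw [Order.height_eq_zero] at h0
        exact hPnotmin (PrimeSpectrum.isMin_iff.mp h0)
      have hPminAnn : P.asIdeal ∈ Ann.minimalPrimes := by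
        refine ⟨⟨P.isPrime, hAnnP⟩, ?_⟩
        rintro Q ⟨hQp, hQa⟩ hQP
        refine hPmin.2 ⟨hQp, ?_⟩ hQP
        rw [Ideal.span_singleton_le_iff_mem]
        exact hQa haAnn
      have : P.asIdeal ∈ minOne R M a := ⟨hPminAnn, by rw [idealHt_prime, hPht]⟩
      exact hbF P.asIdeal (Or.inl (Or.inl this)) hbP
    · exact hbF P.asIdeal (Or.inr ⟨hPmin, hAnnP⟩) hbP
  -- the equality
  · ext x
    simp only [Uset, Set.mem_iInter, Set.mem_setOf_eq]
    constructor
    · intro hx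
      have hxT : (Submodule.Quotient.mk x : N) ∈ T := by
        rw [hmemT]
        intro p hp
        obtain ⟨s, hs1, hs2⟩ := hx p hp
        refine ⟨s, hs1, ?_⟩
        rw [← Submodule.Quotient.mk_smul, Submodule.Quotient.mk_eq_zero]
        exact hs2
      have := Submodule.mem_annihilator.mp hbT _ hxT
      rwa [← Submodule.Quotient.mk_smul, Submodule.Quotient.mk_eq_zero] at this
    · intro hx p hp
      exact ⟨b, hbF p (Or.inl (Or.inl hp)), hx⟩
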